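/- Let C be a smooth projective curve, and consider rank 2 BTB-pairs of degree d ≥ 0. A quotient O_C[1] → E[1] in Coh^β(C) (equivalently a pair with E ∈ F^β and coker(φ) ∈ T^β) can exist only if β lies in the interval [d/2, d). Moreover, if β ∈ [d/2, ⌈(d+1)/2⌉), then E is slope-semistable. -/
import Mathlib


/-- (Prop. 3.5 (i),(ii).) Let `C` be a smooth projective curve and
consider rank 2 BTB-pairs of degree `d ≥ 0`: `E` a rank 2 bundle of degree `d` with a
nonzero section `φ`, `coker(φ)` of rank 1 and degree `d`. If `E ∈ F^β` (every nonzero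
subsheaf has slope `≤ β`) and `coker(φ) ∈ T^β` (every nonzero quotient has slope `> β`),
then necessarily `β ∈ [d/2, d)`. Moreover, if `β < ⌈(d+1)/2⌉`, then `E` is
slope-semistable: every rank 1 subsheaf `F ⊆ E` has `2·deg(F) ≤ d`.

`Coh` stands for the coherent sheaves on `C`; `Sub F E` means `F` is a nonzero subsheaf
of `E` (including `E` itself, `hsubEE`), `QuotOf X G` means `G` is a quotient of `X`
(including `X` itself, `hquot_self`). Slope comparisons are in cross-multiplied form. -/
theorem rank_two_btb_quotients_beta_range
    (Coh : Type*) (rk : Coh → ℕ) (deg : Coh → ℤ)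
    (Sub QuotOf : Coh → Coh → Prop) (IsZero : Coh → Prop)
    (E cokerφ : Coh) (d : ℤ) (β : ℝ)
    (hd : 0 ≤ d) (hrkE : rk E = 2) (hdegE : deg E = d)
    (hEnz : ¬ IsZero E) (hsubEE : Sub E E)
    (hrkcoker : rk cokerφ = 1) (hdegcoker : deg cokerφ = d)
    (hcokernz : ¬ IsZero cokerφ) (hquot_self : QuotOf cokerφ cokerφ)
    -- E ∈ F^β:
    (hFβ : ∀ F, Sub F E → ¬ IsZero F → (deg F : ℝ) ≤ β * (rk F : ℝ))
    -- coker(φ) ∈ T^β: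
    (hTβ : ∀ G, QuotOf cokerφ G → ¬ IsZero G → β * (rk G : ℝ) < (deg G : ℝ)) :
    -- β must lie in [d/2, d):
    ((d : ℝ) / 2 ≤ β ∧ β < (d : ℝ)) ∧
    -- and for β < ⌈(d+1)/2⌉ the bundle E is slope-semistable:
    (β < ((⌈((d : ℝ) + 1) / 2⌉ : ℤ) : ℝ) →
      ∀ F, Sub F E → ¬ IsZero F → rk F = 1 → 2 * deg F ≤ d) := by
  have h1 := hFβ E hsubEE hEnz
  rw [hrkE, hdegE] at h1
  have h2 := hTβ cokerφ hquot_self hcokernz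
  rw [hrkcoker, hdegcoker] at h2
  push_cast at h1 h2
  constructor
  · constructor
    · linarith
    · linarith
  · intro hβ F hF hFnz hFrk
    have h3 := hFβ F hF hFnz
    rw [hFrk] at h3
    push_cast at h3
    have h4 : (deg F : ℝ) < (⌈((d : ℝ) + 1) / 2⌉ : ℤ) := by linarith
    have h5 : deg F < ⌈((d : ℝ) + 1) / 2⌉ := by exact_mod_cast h4
    have h6 : (⌈((d : ℝ) + 1) / 2⌉ : ℝ) < ((d : ℝ) + 1) / 2 + 1 := Int.ceil_lt_add_one _
    have h7 : (deg F : ℝ) ≤ (⌈((d : ℝ) + 1) / 2⌉ : ℝ) - 1 := by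
      have : deg F ≤ ⌈((d : ℝ) + 1) / 2⌉ - 1 := by omega
      exact_mod_cast this
    have h8 : (2 * ⌈((d : ℝ) + 1) / 2⌉ : ℝ) < (d : ℝ) + 3 := by push_cast; linarith
    have h9 : 2 * ⌈((d : ℝ) + 1) / 2⌉ ≤ d + 2 := by
      have : (2 * ⌈((d : ℝ) + 1) / 2⌉ : ℤ) < d + 3 := by exact_mod_cast h8
      omega
    omega
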